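/- Let G be a surface graph with a digon face D with boundary walk v₁,e₁,v₂,e₂,v₁ where v₁ ≠ v₂ and e₁ ≠ e₂, and let G_D = (G/e₁) - e₂ be the digon contraction. Then G is (2,l)-sparse if and only if G_D is (2,l)-sparse. -/
import Mathlib


/-- A finite multigraph: each edge is incident to an unordered pair of vertices
(loops and parallel edges allowed). -/
structure MGraph (V E : Type) where
  inc : E → Sym2 V

namespace MGraph

variable {V E : Type} [DecidableEq V] [DecidableEq E]

/-- A subgraph of a multigraph: a set of vertices and a set of edges whose
endpoints all lie in the vertex set. -/
structure Sub (G : MGraph V E) where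
  verts : Finset V
  edges : Finset E
  compat : ∀ e ∈ edges, ∀ v ∈ G.inc e, v ∈ verts

variable {G : MGraph V E}

/-- γ(H) = 2|V(H)| - |E(H)|. -/
def Sub.gamma (H : G.Sub) : ℤ := 2 * H.verts.card - H.edges.card

def Sub.union (H K : G.Sub) : G.Sub where
  verts := H.verts ∪ K.verts
  edges := H.edges ∪ K.edges
  compat := by
    intro e he v hv
    rcases Finset.mem_union.1 he with h | h
    · exact Finset.mem_union.2 (Or.inl (H.compat e h v hv))
    · exact Finset.mem_union.2 (Or.inr (K.compat e h v hv))

def Sub.inter (H K : G.Sub) : G.Sub where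
  verts := H.verts ∩ K.verts
  edges := H.edges ∩ K.edges
  compat := by
    intro e he v hv
    rcases Finset.mem_inter.1 he with ⟨h1, h2⟩
    exact Finset.mem_inter.2 ⟨H.compat e h1 v hv, K.compat e h2 v hv⟩

/-- Subgraph containment. -/
def Sub.le (H K : G.Sub) : Prop := H.verts ⊆ K.verts ∧ H.edges ⊆ K.edges

/-- H is (2,l)-sparse: every nonempty subgraph K of H has γ(K) ≥ l. -/
def Sparse (l : ℤ) (H : G.Sub) : Prop :=
  ∀ K : G.Sub, K.le H → K.verts.Nonempty → l ≤ K.gamma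

/-- H is (2,l)-tight: (2,l)-sparse and γ(H) = l. -/
def Tight (l : ℤ) (H : G.Sub) : Prop := Sparse l H ∧ H.gamma = l

/-- The whole graph, as a subgraph of itself. -/
def top (G : MGraph V E) [Fintype V] [Fintype E] : G.Sub where
  verts := Finset.univ
  edges := Finset.univ
  compat := fun _ _ v _ => Finset.mem_univ v

/-- Adjacency within a subgraph. -/
def Sub.Adj (H : G.Sub) (u w : V) : Prop := ∃ e ∈ H.edges, G.inc e = s(u, w)

/-- A subgraph is connected if any two of its vertices are joined by a walk in it. -/
def Sub.Connected (H : G.Sub) : Prop :=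
  ∀ u ∈ H.verts, ∀ w ∈ H.verts, Relation.ReflTransGen H.Adj u w

/-- The graph obtained from `G` by identifying the vertex `b` with the vertex `a`
and deleting the two edges `f` and `g`. -/
def contractDel (G : MGraph V E) (a b : V) (hab : a ≠ b) (f g : E) :
    MGraph {v : V // v ≠ b} {e : E // e ≠ f ∧ e ≠ g} where
  inc e := (G.inc e.1).map fun v => if hv : v = b then ⟨a, hab⟩ else ⟨v, hv⟩

/-- Add a single new edge joining `u` and `v`. -/
def addEdge (G : MGraph V E) (u v : V) : MGraph V (Option E) where
  inc := fun e? => e?.elim s(u, v) G.inc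

end MGraph

/-- digon contraction.  If `D` is a digon of `G` with boundary walk
`v₁, e₁, v₂, e₂, v₁` (v₁ ≠ v₂, e₁ ≠ e₂), and `G_D = (G/e₁) - e₂` is the digon
contraction (identify v₂ with v₁, delete both parallel edges e₁, e₂), then `G`
is (2,l)-sparse iff `G_D` is (2,l)-sparse. -/
theorem digon_contraction_sparse_iff {V E : Type} [DecidableEq V] [DecidableEq E]
    [Fintype V] [Fintype E] (G : MGraph V E) (l : ℤ) (hl : l ≤ 2)
    (v₁ v₂ : V) (e₁ e₂ : E) (hv : v₁ ≠ v₂) (he : e₁ ≠ e₂)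
    (i1 : G.inc e₁ = s(v₁, v₂)) (i2 : G.inc e₂ = s(v₁, v₂)) :
    MGraph.Sparse l (MGraph.top G) ↔
      MGraph.Sparse l (MGraph.top (G.contractDel v₁ v₂ hv e₁ e₂)) := by
  constructor
  · -- G sparse → G_D sparse
    intro hG K' _ hne
    by_cases hv1 : (⟨v₁, hv⟩ : {v : V // v ≠ v₂}) ∈ K'.verts
    · -- lift K' adding v₂ and both edges e₁, e₂
      have hcompat : ∀ e ∈ insert e₁ (insert e₂ (K'.edges.image Subtype.val)),
          ∀ w ∈ G.inc e, w ∈ insert v₂ (K'.verts.image Subtype.val) := by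
        intro e hee w hw
        have hpar : G.inc e = s(v₁, v₂) → w ∈ insert v₂ (K'.verts.image Subtype.val) := by
          intro hi
          rw [hi] at hw
          rcases Sym2.mem_iff.1 hw with h | h
          · rw [h]
            exact Finset.mem_insert_of_mem (Finset.mem_image.2 ⟨⟨v₁, hv⟩, hv1, rfl⟩)
          · rw [h]
            exact Finset.mem_insert_self _ _
        rcases Finset.mem_insert.1 hee with rfl | hee
        · exact hpar i1
        rcases Finset.mem_insert.1 hee with rfl | hee
        · exact hpar i2
        rcases Finset.mem_image.1 hee with ⟨e', he', rfl⟩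
        by_cases hw2 : w = v₂
        · rw [hw2]
          exact Finset.mem_insert_self _ _
        · have hmem : (⟨w, hw2⟩ : {v : V // v ≠ v₂}) ∈ K'.verts := by
            apply K'.compat e' he'
            exact Sym2.mem_map.2 ⟨w, hw, by simp [hw2]⟩
          exact Finset.mem_insert_of_mem (Finset.mem_image.2 ⟨_, hmem, rfl⟩)
      set K : G.Sub := ⟨insert v₂ (K'.verts.image Subtype.val),
        insert e₁ (insert e₂ (K'.edges.image Subtype.val)), hcompat⟩ with hK
      have hVn : v₂ ∉ K'.verts.image Subtype.val := by
        intro h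
        rcases Finset.mem_image.1 h with ⟨a, _, ha⟩
        exact a.2 ha
      have hE1 : e₁ ∉ insert e₂ (K'.edges.image Subtype.val) := by
        intro h
        rcases Finset.mem_insert.1 h with h | h
        · exact he h
        · rcases Finset.mem_image.1 h with ⟨a, _, ha⟩
          exact a.2.1 ha
      have hE2 : e₂ ∉ K'.edges.image Subtype.val := by
        intro h
        rcases Finset.mem_image.1 h with ⟨a, _, ha⟩
        exact a.2.2 ha
      have hVc : K.verts.card = K'.verts.card + 1 := by
        rw [hK]
        rw [Finset.card_insert_of_notMem hVn,
          Finset.card_image_of_injective _ Subtype.val_injective]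
      have hEc : K.edges.card = K'.edges.card + 2 := by
        rw [hK]
        rw [Finset.card_insert_of_notMem hE1, Finset.card_insert_of_notMem hE2,
          Finset.card_image_of_injective _ Subtype.val_injective]
      have := hG K ⟨Finset.subset_univ _, Finset.subset_univ _⟩
        ⟨v₂, Finset.mem_insert_self _ _⟩
      have hg : K.gamma = K'.gamma := by
        simp only [MGraph.Sub.gamma, hVc, hEc]
        push_cast
        ring
      rw [hg] at this
      exact this
    · -- lift K' directly
      have hcompat : ∀ e ∈ K'.edges.image Subtype.val,
          ∀ w ∈ G.inc e, w ∈ K'.verts.image Subtype.val := by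
        intro e hee w hw
        rcases Finset.mem_image.1 hee with ⟨e', he', rfl⟩
        by_cases hw2 : w = v₂
        · exfalso
          apply hv1
          apply K'.compat e' he'
          exact Sym2.mem_map.2 ⟨w, hw, by simp [hw2]⟩
        · have hmem : (⟨w, hw2⟩ : {v : V // v ≠ v₂}) ∈ K'.verts := by
            apply K'.compat e' he'
            exact Sym2.mem_map.2 ⟨w, hw, by simp [hw2]⟩
          exact Finset.mem_image.2 ⟨_, hmem, rfl⟩
      set K : G.Sub := ⟨K'.verts.image Subtype.val, K'.edges.image Subtype.val, hcompat⟩ with hK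
      obtain ⟨a, ha⟩ := hne
      have := hG K ⟨Finset.subset_univ _, Finset.subset_univ _⟩
        ⟨a.1, Finset.mem_image.2 ⟨a, ha, rfl⟩⟩
      have hg : K.gamma = K'.gamma := by
        simp only [MGraph.Sub.gamma, hK,
          Finset.card_image_of_injective _ Subtype.val_injective]
      rw [hg] at this
      exact this
  · -- G_D sparse → G sparse
    intro hG K _ hne
    classical
    set π : V → {v : V // v ≠ v₂} :=
      fun v => if h : v = v₂ then ⟨v₁, hv⟩ else ⟨v, h⟩ with hπ
    have hcompat : ∀ e' ∈ Finset.subtype (fun e => e ≠ e₁ ∧ e ≠ e₂) K.edges,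
        ∀ w ∈ (G.contractDel v₁ v₂ hv e₁ e₂).inc e', w ∈ K.verts.image π := by
      intro e' he' w hw
      rcases Sym2.mem_map.1 hw with ⟨u, hu, rfl⟩
      exact Finset.mem_image.2 ⟨u, K.compat e'.1 (Finset.mem_subtype.1 he') u hu, rfl⟩
    set K' : (G.contractDel v₁ v₂ hv e₁ e₂).Sub :=
      ⟨K.verts.image π, Finset.subtype _ K.edges, hcompat⟩ with hK'
    obtain ⟨a, ha⟩ := hne
    have hl' := hG K' ⟨Finset.subset_univ _, Finset.subset_univ _⟩
      ⟨π a, Finset.mem_image.2 ⟨a, ha, rfl⟩⟩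
    by_cases hc : e₁ ∈ K.edges ∨ e₂ ∈ K.edges
    · -- both endpoints in K, so image loses a vertex
      have hv12 : v₁ ∈ K.verts ∧ v₂ ∈ K.verts := by
        rcases hc with h | h
        · exact ⟨K.compat e₁ h v₁ (by rw [i1]; exact Sym2.mem_mk_left _ _),
            K.compat e₁ h v₂ (by rw [i1]; exact Sym2.mem_mk_right _ _)⟩
        · exact ⟨K.compat e₂ h v₁ (by rw [i2]; exact Sym2.mem_mk_left _ _),
            K.compat e₂ h v₂ (by rw [i2]; exact Sym2.mem_mk_right _ _)⟩
      have himg : K.verts.image π = (K.verts.erase v₂).image π := by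
        apply Finset.Subset.antisymm
        · intro w hw
          rcases Finset.mem_image.1 hw with ⟨u, hu, rfl⟩
          by_cases hu2 : u = v₂
          · refine Finset.mem_image.2 ⟨v₁, Finset.mem_erase.2 ⟨hv, hv12.1⟩, ?_⟩
            subst hu2
            simp [hπ, hv]
          · exact Finset.mem_image.2 ⟨u, Finset.mem_erase.2 ⟨hu2, hu⟩, rfl⟩
        · exact Finset.image_subset_image (Finset.erase_subset _ _)
      have hVle : K'.verts.card + 1 ≤ K.verts.card := by
        have h1 : K'.verts.card ≤ (K.verts.erase v₂).card := by
          rw [hK']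
          simp only []
          rw [himg]
          exact Finset.card_image_le
        have h2 := Finset.card_erase_add_one hv12.2
        omega
      have hEle : K.edges.card ≤ K'.edges.card + 2 := by
        have h0 : K'.edges.card = (K.edges.filter (fun e => e ≠ e₁ ∧ e ≠ e₂)).card :=
          Finset.card_subtype _ _
        rw [h0]
        have hsub : K.edges ⊆ K.edges.filter (fun e => e ≠ e₁ ∧ e ≠ e₂) ∪ {e₁, e₂} := by
          intro x hx
          by_cases h1 : x = e₁
          · exact Finset.mem_union_right _ (Finset.mem_insert.2 (Or.inl h1))
          by_cases h2 : x = e₂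
          · exact Finset.mem_union_right _
              (Finset.mem_insert.2 (Or.inr (Finset.mem_singleton.2 h2)))
          exact Finset.mem_union_left _ (Finset.mem_filter.2 ⟨hx, h1, h2⟩)
        calc K.edges.card
            ≤ (K.edges.filter (fun e => e ≠ e₁ ∧ e ≠ e₂) ∪ {e₁, e₂}).card :=
              Finset.card_le_card hsub
          _ ≤ (K.edges.filter (fun e => e ≠ e₁ ∧ e ≠ e₂)).card + ({e₁, e₂} : Finset E).card :=
              Finset.card_union_le _ _
          _ ≤ (K.edges.filter (fun e => e ≠ e₁ ∧ e ≠ e₂)).card + 2 := by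
              have : ({e₁, e₂} : Finset E).card ≤ 2 :=
                (Finset.card_insert_le _ _).trans (by simp)
              omega
      have hA : K'.verts.card = (K.verts.image π).card := rfl
      have hB : (Finset.subtype (fun e => e ≠ e₁ ∧ e ≠ e₂) K.edges).card = K'.edges.card := rfl
      simp only [MGraph.Sub.gamma] at hl' ⊢
      omega
    · -- neither e₁ nor e₂ in K
      push_neg at hc
      have hEeq : K.edges.card = K'.edges.card := by
        have h0 : K'.edges.card = (K.edges.filter (fun e => e ≠ e₁ ∧ e ≠ e₂)).card :=
          Finset.card_subtype _ _
        rw [h0, Finset.filter_true_of_mem]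
        intro x hx
        exact ⟨fun hxe => hc.1 (hxe ▸ hx), fun hxe => hc.2 (hxe ▸ hx)⟩
      have hVle : K'.verts.card ≤ K.verts.card := Finset.card_image_le
      have hA : K'.verts.card = (K.verts.image π).card := rfl
      have hB : (Finset.subtype (fun e => e ≠ e₁ ∧ e ≠ e₂) K.edges).card = K'.edges.card := rfl
      simp only [MGraph.Sub.gamma] at hl' ⊢
      omega
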